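/- Let Ĵ be the 3×3 complex matrix with −2 on the diagonal, 1 on the superdiagonal, and zeros elsewhere (so that λI₃ + Ĵ is a pencil whose only eigenvalue is 2 with a single Jordan block of size 3). For a ∈ ℂ, let D_a be the 3×3 complex matrix with rows (−a, 0, 0), (0, −2, 1), (0, 0, −2). Then the pair (I₃, Ĵ) belongs to the closure, in the space of pairs of 3×3 complex matrices with the standard topology, of the set { (P·Q, P·D_a·Q) : a ∈ ℂ, a ≠ 2, P and Q invertible 3×3 complex matrices }. -/

import Mathlib

open Filter Topology Matrix

/-- The pencil `λI₃ + Ĵ`, a single `3 × 3` Jordan block at the eigenvalue `2` (so `Ĵ` has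
`−2` on the diagonal and `1` on the superdiagonal), lies in the closure of the union of
the strict equivalence orbits of the pencils `λI₃ + D_a = diag(λ − a, λI₂ + J₂(2))` with
`a ≠ 2`. Pencils `λB + A` are identified with pairs `(B, A)` of `3 × 3` matrices. -/
theorem jordan3_mem_closure_bundle :
    ((1 : Matrix (Fin 3) (Fin 3) ℂ),
      (!![(-2 : ℂ), 1, 0; 0, -2, 1; 0, 0, -2] : Matrix (Fin 3) (Fin 3) ℂ)) ∈
      closure { X : Matrix (Fin 3) (Fin 3) ℂ × Matrix (Fin 3) (Fin 3) ℂ |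
        ∃ a : ℂ, a ≠ 2 ∧ ∃ P Q : Matrix (Fin 3) (Fin 3) ℂ, IsUnit P ∧ IsUnit Q ∧
          X = (P * Q, P * (!![-a, 0, 0; 0, -2, 1; 0, 0, -2] : Matrix (Fin 3) (Fin 3) ℂ) * Q) } := by
  set f : ℂ → Matrix (Fin 3) (Fin 3) ℂ × Matrix (Fin 3) (Fin 3) ℂ :=
    fun ε => (1, !![(-2 : ℂ), 1, 0; 0, -2, 1; 0, 0, -2]
      + ε • !![(-1 : ℂ), 0, 0; 0, 0, 0; 0, 0, 0]) with hf
  have htend : Tendsto f (𝓝[≠] (0:ℂ))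
      (𝓝 ((1 : Matrix (Fin 3) (Fin 3) ℂ),
        !![(-2 : ℂ), 1, 0; 0, -2, 1; 0, 0, -2])) := by
    have h1 : Tendsto f (𝓝 (0:ℂ))
        (𝓝 ((1 : Matrix (Fin 3) (Fin 3) ℂ),
          !![(-2 : ℂ), 1, 0; 0, -2, 1; 0, 0, -2])) := by
      have : Continuous f := by fun_prop
      simpa [hf] using this.tendsto 0
    exact h1.mono_left nhdsWithin_le_nhds
  refine mem_closure_of_tendsto htend ?_
  filter_upwards [self_mem_nhdsWithin] with ε (hε : ε ≠ 0)
  set P : Matrix (Fin 3) (Fin 3) ℂ := !![1, 1, 0; 0, ε, 1; 0, 0, ε] with hP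
  set Q : Matrix (Fin 3) (Fin 3) ℂ :=
    !![1, -ε⁻¹, ε⁻¹ * ε⁻¹; 0, ε⁻¹, -(ε⁻¹ * ε⁻¹); 0, 0, ε⁻¹] with hQ
  have hPQ : P * Q = 1 := by
    ext i j; fin_cases i <;> fin_cases j <;>
      simp [hP, hQ, Matrix.mul_apply, Fin.sum_univ_succ, Matrix.one_apply] <;>
      field_simp <;> ring
  have hQP : Q * P = 1 := by
    ext i j; fin_cases i <;> fin_cases j <;>
      simp [hP, hQ, Matrix.mul_apply, Fin.sum_univ_succ, Matrix.one_apply] <;>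
      field_simp <;> ring
  refine ⟨2 + ε, by simpa using hε, P, Q, ⟨⟨P, Q, hPQ, hQP⟩, rfl⟩,
    ⟨⟨Q, P, hQP, hPQ⟩, rfl⟩, ?_⟩
  simp only [hf, Prod.mk.injEq]
  refine ⟨hPQ.symm, ?_⟩
  ext i j; fin_cases i <;> fin_cases j
  all_goals simp [hP, hQ, Matrix.mul_apply, Fin.sum_univ_succ, Matrix.vecHead, Matrix.vecTail]
  all_goals try field_simp
  all_goals ring
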